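/- Let a > 0, β > −1, γ ∈ ℝ with γ ≠ −1, y ∉ [−a,a], and f ∈ C²[−a,a]. For N ∈ ℕ with N ≥ 1, set h = a/N and x_t = t·h for real t, and define E_N = ∫_{−a}^{a} |x|^β |x−y|^γ f(x) dx − (1/h) ∑_{n=−N}^{N−1} ((sgn(x_{n+1})·|x_{n+1}|^{β+1} − sgn(x_n)·|x_n|^{β+1})/(β+1)) · ((sgn(x_{n+1}−y)·|x_{n+1}−y|^{γ+1} − sgn(x_n−y)·|x_n−y|^{γ+1})/(γ+1)) · f(x_{n+1/2}). Then there exists K > 0 such that for all N ≥ 1, |E_N| ≤ K/N². -/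

import Mathlib

open Filter MeasureTheory Set

/-- The quadrature error `E_N` for `∫_{−a}^{a} |x|^β |x−y|^γ f(x) dx`, with `h = a/N` and
`x_t = t·h`, where both singular factors are integrated exactly on each subinterval and
`f` is evaluated at the midpoints. -/
noncomputable def quadErrorSym (a β γ y : ℝ) (f : ℝ → ℝ) (N : ℕ) : ℝ :=
  (∫ x in (-a)..a, |x| ^ β * |x - y| ^ γ * f x) -
    (1 / (a / N)) *
      ∑ n ∈ Finset.Icc (-(N : ℤ)) ((N : ℤ) - 1),
        ((Real.sign (((n : ℝ) + 1) * (a / N)) * |((n : ℝ) + 1) * (a / N)| ^ (β + 1) -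
            Real.sign ((n : ℝ) * (a / N)) * |(n : ℝ) * (a / N)| ^ (β + 1)) / (β + 1)) *
        ((Real.sign (((n : ℝ) + 1) * (a / N) - y) * |((n : ℝ) + 1) * (a / N) - y| ^ (γ + 1) -
            Real.sign ((n : ℝ) * (a / N) - y) * |(n : ℝ) * (a / N) - y| ^ (γ + 1)) / (γ + 1)) *
        f (((n : ℝ) + 1 / 2) * (a / N))

section Helpers
open intervalIntegral

/-- Package of facts about a `C²` function on `Icc c d`. -/
lemma c2_package {c d : ℝ} (hcd : c < d) (g : ℝ → ℝ) (hg : ContDiffOn ℝ 2 g (Icc c d)) :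
    ∃ (g' : ℝ → ℝ) (L : ℝ), 0 < L ∧
      (∀ x ∈ Icc c d, HasDerivWithinAt g (g' x) (Icc c d) x) ∧
      (∀ x ∈ Icc c d, |g x| ≤ L) ∧
      (∀ u ∈ Icc c d, ∀ v ∈ Icc c d, |g' u - g' v| ≤ L * |u - v|) ∧
      (∀ m ∈ Icc c d, ∀ x ∈ Icc c d, |g x - g m - g' m * (x - m)| ≤ L * (x - m) ^ 2) := by
  have hu : UniqueDiffOn ℝ (Icc c d) := uniqueDiffOn_Icc hcd
  set s := Icc c d with hs
  set g' := derivWithin g s with hg'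
  have hdiff : DifferentiableOn ℝ g s := hg.differentiableOn (by norm_num)
  have hder : ∀ x ∈ s, HasDerivWithinAt g (g' x) s x := fun x hx =>
    (hdiff x hx).hasDerivWithinAt
  have hg'1 : ContDiffOn ℝ 1 g' s := hg.derivWithin hu (by norm_num)
  set g'' := derivWithin g' s with hg''
  have hder' : ∀ x ∈ s, HasDerivWithinAt g' (g'' x) s x := fun x hx =>
    ((hg'1.differentiableOn (by norm_num)) x hx).hasDerivWithinAt
  -- bounds
  have hcomp : IsCompact s := isCompact_Icc
  obtain ⟨C0, hC0⟩ := hcomp.exists_bound_of_continuousOn (hg.continuousOn)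
  obtain ⟨C2, hC2⟩ := hcomp.exists_bound_of_continuousOn
    (hg'1.continuousOn_derivWithin hu (by norm_num))
  set L := max C0 C2 + 1 with hL
  have hC0' : C0 ≤ L := by simp [hL]; nlinarith [le_max_left C0 C2]
  have hC2' : C2 ≤ L := by nlinarith [le_max_right C0 C2]
  have hLpos : 0 < L := by
    have := hC0 c ⟨le_rfl, hcd.le⟩
    have : 0 ≤ C0 := le_trans (abs_nonneg _) this
    nlinarith [le_max_left C0 C2]
  have hconv : Convex ℝ s := convex_Icc c d
  have hlip : ∀ u ∈ s, ∀ v ∈ s, |g' u - g' v| ≤ L * |u - v| := by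
    intro u hu' v hv
    have := Convex.norm_image_sub_le_of_norm_hasDerivWithin_le hder'
      (fun x hx => le_trans (hC2 x hx) hC2') hconv hv hu'
    simpa [Real.norm_eq_abs] using this
  refine ⟨g', L, hLpos, hder, fun x hx => le_trans (hC0 x hx) hC0', hlip, ?_⟩
  -- Taylor-type bound
  intro m hm x hx
  have hseg : uIcc m x ⊆ s := by rw [hs] at hm hx ⊢; exact uIcc_subset_Icc hm hx
  set ψ := fun t => g t - g' m * t with hψ
  have hψder : ∀ t ∈ uIcc m x, HasDerivWithinAt ψ (g' t - g' m) (uIcc m x) t := by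
    intro t ht
    exact (((hder t (hseg ht)).mono hseg)).sub
      ((hasDerivAt_id t).const_mul (g' m)).hasDerivWithinAt |>.congr_deriv (by ring)
  have hbd : ∀ t ∈ uIcc m x, ‖g' t - g' m‖ ≤ L * |x - m| := by
    intro t ht
    have h1 := hlip t (hseg ht) m hm
    have h2 : |t - m| ≤ |x - m| := by
      rcases le_total m x with h | h
      · rw [uIcc_of_le h] at ht; rw [abs_of_nonneg (by linarith [ht.1]), abs_of_nonneg (by linarith)]
        linarith [ht.2]
      · rw [uIcc_of_ge h] at ht; rw [abs_of_nonpos (by linarith [ht.2]), abs_of_nonpos (by linarith)]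
        linarith [ht.1]
    calc ‖g' t - g' m‖ = |g' t - g' m| := rfl
      _ ≤ L * |t - m| := h1
      _ ≤ L * |x - m| := by nlinarith
  have := Convex.norm_image_sub_le_of_norm_hasDerivWithin_le hψder hbd (convex_uIcc m x)
    left_mem_uIcc right_mem_uIcc
  have heq : ψ x - ψ m = g x - g m - g' m * (x - m) := by simp [hψ]; ring
  rw [← heq]
  calc ‖ψ x - ψ m‖ ≤ L * |x - m| * ‖x - m‖ := this
    _ = L * (x - m) ^ 2 := by rw [Real.norm_eq_abs, mul_assoc, ← abs_mul, abs_mul_self]; ring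


lemma sign_rpow_pos {u p : ℝ} (hu : 0 ≤ u) (hp : 0 < p) :
    Real.sign u * |u| ^ p = u ^ p := by
  rcases eq_or_lt_of_le hu with h | h
  · simp [← h, Real.sign_zero, Real.zero_rpow hp.ne']
  · rw [Real.sign_of_pos h, abs_of_pos h, one_mul]

lemma sign_rpow_neg {u p : ℝ} (hu : u ≤ 0) (hp : 0 < p) :
    Real.sign u * |u| ^ p = -(-u) ^ p := by
  rcases eq_or_lt_of_le hu with h | h
  · simp [h, Real.sign_zero, Real.zero_rpow hp.ne']
  · rw [Real.sign_of_neg h, abs_of_neg h]; ring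

lemma int_abs_rpow {β u v : ℝ} (hβ : -1 < β) (hu : 0 ≤ u) (huv : u ≤ v) :
    ∫ x in u..v, |x| ^ β = (v ^ (β+1) - u ^ (β+1)) / (β+1) := by
  rw [show (∫ x in u..v, |x| ^ β) = ∫ x in u..v, x ^ β from
    integral_congr (fun x hx => by
      rw [uIcc_of_le huv] at hx
      rw [abs_of_nonneg (le_trans hu hx.1)])]
  exact integral_rpow (Or.inl hβ)

lemma ftc_w2_lt {γ y u v : ℝ} (hγ : γ ≠ -1) (hu : u < y) (hv : v < y) :
    (Real.sign (v - y) * |v - y| ^ (γ+1) - Real.sign (u - y) * |u - y| ^ (γ+1)) / (γ+1)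
      = ∫ x in u..v, |x - y| ^ γ := by
  have hγ1 : γ + 1 ≠ 0 := by intro h; apply hγ; linarith
  have key : ∀ t ∈ uIcc u v, t < y := by
    intro t ht
    rcases le_total u v with h | h
    · rw [uIcc_of_le h] at ht; linarith [ht.2]
    · rw [uIcc_of_ge h] at ht; linarith [ht.2]
  have hderiv : ∀ t ∈ uIcc u v,
      HasDerivAt (fun x => -(y - x) ^ (γ+1) / (γ+1)) ((y - t) ^ γ) t := by
    intro t ht
    have h0 : y - t ≠ 0 := by have := key t ht; intro h; linarith [this]
    have h1 : HasDerivAt (fun x : ℝ => y - x) (-1) t := by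
      simpa using (hasDerivAt_id t).const_sub y
    have h2 := h1.rpow_const (p := γ + 1) (Or.inl h0)
    have h3 := (h2.neg).div_const (γ + 1)
    refine h3.congr_deriv ?_
    rw [add_sub_cancel_right]; field_simp
  have hcont : ContinuousOn (fun x => (y - x) ^ γ) (uIcc u v) := by
    intro t ht
    have h0 : y - t ≠ 0 := by have := key t ht; intro h; linarith [this]
    exact ((by fun_prop : ContinuousAt (fun x : ℝ => y - x) t).rpow_const
      (Or.inl h0)).continuousWithinAt
  have := integral_eq_sub_of_hasDerivAt hderiv (hcont.intervalIntegrable)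
  have heq : (∫ x in u..v, |x - y| ^ γ) = ∫ x in u..v, (y - x) ^ γ :=
    integral_congr (fun x hx => by rw [abs_of_neg (by linarith [key x hx])]; ring_nf)
  rw [heq, this, Real.sign_of_neg (by linarith : v - y < 0),
    Real.sign_of_neg (by linarith : u - y < 0), abs_of_neg (by linarith : v - y < 0),
    abs_of_neg (by linarith : u - y < 0)]
  field_simp
  ring_nf
lemma ftc_w2_gt {γ y u v : ℝ} (hγ : γ ≠ -1) (hu : y < u) (hv : y < v) :
    (Real.sign (v - y) * |v - y| ^ (γ+1) - Real.sign (u - y) * |u - y| ^ (γ+1)) / (γ+1)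
      = ∫ x in u..v, |x - y| ^ γ := by
  have hγ1 : γ + 1 ≠ 0 := by intro h; apply hγ; linarith
  have key : ∀ t ∈ uIcc u v, y < t := by
    intro t ht
    rcases le_total u v with h | h
    · rw [uIcc_of_le h] at ht; linarith [ht.1]
    · rw [uIcc_of_ge h] at ht; linarith [ht.1]
  have hderiv : ∀ t ∈ uIcc u v,
      HasDerivAt (fun x => (x - y) ^ (γ+1) / (γ+1)) ((t - y) ^ γ) t := by
    intro t ht
    have h0 : t - y ≠ 0 := by have := key t ht; intro h; linarith [this]
    have h1 : HasDerivAt (fun x : ℝ => x - y) 1 t := (hasDerivAt_id t).sub_const y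
    have h2 := h1.rpow_const (p := γ + 1) (Or.inl h0)
    have h3 := h2.div_const (γ + 1)
    refine h3.congr_deriv ?_
    rw [add_sub_cancel_right]; field_simp
  have hcont : ContinuousOn (fun x => (x - y) ^ γ) (uIcc u v) := by
    intro t ht
    have h0 : t - y ≠ 0 := by have := key t ht; intro h; linarith [this]
    exact ((by fun_prop : ContinuousAt (fun x : ℝ => x - y) t).rpow_const
      (Or.inl h0)).continuousWithinAt
  have := integral_eq_sub_of_hasDerivAt hderiv (hcont.intervalIntegrable)
  have heq : (∫ x in u..v, |x - y| ^ γ) = ∫ x in u..v, (x - y) ^ γ :=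
    integral_congr (fun x hx => by rw [abs_of_pos (by linarith [key x hx])])
  rw [heq, this, Real.sign_of_pos (by linarith : 0 < v - y),
    Real.sign_of_pos (by linarith : 0 < u - y), abs_of_pos (by linarith : 0 < v - y),
    abs_of_pos (by linarith : 0 < u - y)]
  ring



lemma int_sub_mid (u v : ℝ) : ∫ x in u..v, (x - (u+v)/2) = 0 := by
  have : ∫ x in u..v, (x - (u+v)/2) = (∫ x in u..v, x) - (∫ x in u..v, (u+v)/2) :=
    integral_sub intervalIntegrable_id (intervalIntegrable_const)
  rw [this, integral_id, intervalIntegral.integral_const, smul_eq_mul]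
  ring


lemma sum_rpow_le {β : ℝ} (hβ : -1 < β) (N : ℕ) :
    ∑ n ∈ Finset.range N, ((n : ℝ) + 1) ^ β ≤ (1 + 1/(β+1)) * (N : ℝ) ^ (β+1) := by
  have hβ1 : 0 < β + 1 := by linarith
  rcases Nat.eq_zero_or_pos N with rfl | hN
  · simp [Real.zero_rpow hβ1.ne']
  have hNpos : (0:ℝ) < N := by exact_mod_cast hN
  rcases le_or_gt 0 β with hb | hb
  · -- each term ≤ N^β
    have h1 : ∀ n ∈ Finset.range N, ((n:ℝ)+1) ^ β ≤ (N:ℝ) ^ β := by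
      intro n hn
      apply Real.rpow_le_rpow (by positivity) _ hb
      have := Finset.mem_range.mp hn
      exact_mod_cast Nat.succ_le_of_lt this
    calc ∑ n ∈ Finset.range N, ((n : ℝ) + 1) ^ β ≤ ∑ n ∈ Finset.range N, (N:ℝ) ^ β :=
          Finset.sum_le_sum h1
      _ = (N:ℝ) * (N:ℝ) ^ β := by rw [Finset.sum_const, Finset.card_range]; ring
      _ = (N:ℝ) ^ (β+1) := by
          rw [add_comm, Real.rpow_add hNpos, Real.rpow_one]
      _ ≤ (1 + 1/(β+1)) * (N : ℝ) ^ (β+1) := by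
          nlinarith [Real.rpow_nonneg (le_of_lt hNpos) (β+1), one_div_pos.mpr hβ1]
  · -- compare with integral
    have key : ∀ n : ℕ, ((n:ℝ)+1) ^ β ≤ ∫ x in (n:ℝ)..((n:ℝ)+1), x ^ β := by
      intro n
      rcases Nat.eq_zero_or_pos n with h0 | h0
      · subst h0
        rw [integral_rpow (Or.inl hβ)]
        simp only [Nat.cast_zero, zero_add, Real.one_rpow, Real.zero_rpow hβ1.ne']
        rw [sub_zero]
        rw [le_div_iff₀ hβ1]
        nlinarith
      · have hn : (1:ℝ) ≤ (n:ℝ) := by exact_mod_cast h0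
        apply le_trans (le_of_eq (by rw [intervalIntegral.integral_const, smul_eq_mul]; ring :
          ((n:ℝ)+1) ^ β = ∫ _ in (n:ℝ)..((n:ℝ)+1), ((n:ℝ)+1) ^ β))
        apply integral_mono_on (by linarith) intervalIntegrable_const
          (intervalIntegrable_rpow' hβ)
        intro x hx
        exact Real.rpow_le_rpow_of_nonpos (by linarith [hx.1]) hx.2 hb.le
    have tele : ∑ n ∈ Finset.range N, ∫ x in (n:ℝ)..((n:ℝ)+1), x ^ β
        = ∫ x in (0:ℝ)..(N:ℝ), x ^ β := by
      have := sum_integral_adjacent_intervals (μ := MeasureTheory.volume)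
        (f := fun x : ℝ => x ^ β) (a := fun k : ℕ => (k:ℝ)) (n := N)
        (fun k _ => intervalIntegrable_rpow' hβ)
      simpa using this
    calc ∑ n ∈ Finset.range N, ((n : ℝ) + 1) ^ β
        ≤ ∑ n ∈ Finset.range N, ∫ x in (n:ℝ)..((n:ℝ)+1), x ^ β :=
          Finset.sum_le_sum (fun n _ => key n)
      _ = ∫ x in (0:ℝ)..(N:ℝ), x ^ β := tele
      _ = ((N:ℝ) ^ (β+1) - 0 ^ (β+1)) / (β+1) := integral_rpow (Or.inl hβ)
      _ ≤ (1 + 1/(β+1)) * (N : ℝ) ^ (β+1) := by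
          rw [Real.zero_rpow hβ1.ne', sub_zero, div_eq_mul_one_div, mul_comm]
          nlinarith [Real.rpow_nonneg (le_of_lt hNpos) (β+1), one_div_pos.mpr hβ1]


lemma sum_Icc_pair (F : ℤ → ℝ) (N : ℕ) :
    ∑ n ∈ Finset.Icc (-(N:ℤ)) ((N:ℤ)-1), F n
      = ∑ k ∈ Finset.range N, (F (k:ℤ) + F (-1-(k:ℤ))) := by
  induction N with
  | zero => simp
  | succ N ih =>
    have h1 : Finset.Icc (-(N+1:ℤ)) ((N+1:ℤ)-1)
        = insert (-(N+1:ℤ)) (insert ((N:ℤ)) (Finset.Icc (-(N:ℤ)) ((N:ℤ)-1))) := by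
      ext x
      simp only [Finset.mem_Icc, Finset.mem_insert]
      omega
    push_cast
    rw [h1, Finset.sum_insert, Finset.sum_insert, Finset.sum_range_succ, ih]
    · rw [show (-1 - (N:ℤ)) = -((N:ℤ)+1) by ring]
      ring
    · simp only [Finset.mem_Icc]; omega
    · simp only [Finset.mem_insert, Finset.mem_Icc]; omega


lemma midpoint_est {c d Lw : ℝ} (hLw : 0 ≤ Lw) (w2 w2' : ℝ → ℝ)
    (hwtay : ∀ m ∈ Icc c d, ∀ x ∈ Icc c d, |w2 x - w2 m - w2' m * (x-m)| ≤ Lw * (x-m)^2)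
    (hw2cont : ContinuousOn w2 (Icc c d)) {u v : ℝ} (huv : u ≤ v) (hu : c ≤ u) (hv : v ≤ d) :
    |(∫ x in u..v, w2 x) - (v-u) * w2 ((u+v)/2)| ≤ Lw * (v-u)^3 / 4 := by
  set m := (u+v)/2 with hm_def
  have hm : m ∈ Icc c d := ⟨by simp [hm_def]; linarith, by simp [hm_def]; linarith⟩
  have hsub : Icc u v ⊆ Icc c d := fun x hx => ⟨le_trans hu hx.1, le_trans hx.2 hv⟩
  have hsub' : uIcc u v ⊆ Icc c d := by rw [uIcc_of_le huv]; exact hsub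
  have hint : IntervalIntegrable w2 MeasureTheory.volume u v :=
    (hw2cont.mono hsub').intervalIntegrable
  have hint2 : IntervalIntegrable (fun x => w2 m + w2' m * (x - m))
      MeasureTheory.volume u v :=
    ((by fun_prop : Continuous (fun x : ℝ => w2 m + w2' m * (x - m))).intervalIntegrable u v)
  have heq : (∫ x in u..v, w2 x) - (v-u) * w2 m
      = ∫ x in u..v, (w2 x - (w2 m + w2' m * (x - m))) := by
    rw [integral_sub hint hint2]
    have : ∫ x in u..v, (w2 m + w2' m * (x - m))
        = (∫ _ in u..v, w2 m) + w2' m * ∫ x in u..v, (x - m) := by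
      rw [← intervalIntegral.integral_const_mul]
      exact integral_add intervalIntegrable_const
        ((by fun_prop : Continuous (fun x : ℝ => w2' m * (x - m))).intervalIntegrable u v)
    rw [this, hm_def, int_sub_mid, intervalIntegral.integral_const, smul_eq_mul]
    ring
  rw [heq]
  have hbd : ∀ x ∈ Set.uIoc u v, ‖w2 x - (w2 m + w2' m * (x - m))‖ ≤ Lw * (v-u)^2 / 4 := by
    intro x hx
    rw [Set.uIoc_of_le huv] at hx
    have hx' : x ∈ Icc c d := hsub ⟨hx.1.le, hx.2⟩
    have h1 := hwtay m hm x hx'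
    have h2 : (x - m)^2 ≤ ((v-u)/2)^2 := by
      have : |x - m| ≤ (v-u)/2 := by
        rw [abs_le]; constructor <;> [skip; skip] <;> simp [hm_def] <;> nlinarith [hx.1.le, hx.2]
      nlinarith [abs_nonneg (x - m), sq_abs (x - m)]
    calc ‖w2 x - (w2 m + w2' m * (x - m))‖ = |w2 x - w2 m - w2' m * (x - m)| := by
          rw [Real.norm_eq_abs]; ring_nf
      _ ≤ Lw * (x-m)^2 := h1
      _ ≤ Lw * (v-u)^2 / 4 := by nlinarith
  calc |∫ x in u..v, (w2 x - (w2 m + w2' m * (x - m)))|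
      ≤ Lw * (v-u)^2 / 4 * |v - u| := norm_integral_le_of_norm_le_const hbd
    _ = Lw * (v-u)^3 / 4 := by rw [abs_of_nonneg (by linarith : (0:ℝ) ≤ v - u)]; ring


lemma Imoment_zero {β h : ℝ} (hβ : -1 < β) (hh : 0 < h) :
    |∫ x in ((0:ℝ)*h)..(((0:ℝ)+1)*h), x ^ β * (x - ((0:ℝ)+1/2)*h)| ≤ h ^ (β+2) / (2*(β+1)) := by
  rw [show (0:ℝ)*h = 0 by ring, show ((0:ℝ)+1)*h = h by ring]
  have hβ1 : 0 < β + 1 := by linarith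
  have hint : IntervalIntegrable (fun x => x ^ β * (x - (0+1/2)*h))
      MeasureTheory.volume 0 h :=
    (intervalIntegrable_rpow' hβ).mul_continuousOn (by fun_prop)
  have h1 : |∫ x in (0:ℝ)..h, x ^ β * (x - (0+1/2)*h)|
      ≤ (∫ x in (0:ℝ)..h, x ^ β * (h/2)) := by
    have habs := intervalIntegral.abs_integral_le_integral_abs (μ := MeasureTheory.volume)
      (f := fun x => x ^ β * (x - (0+1/2)*h)) (a := (0:ℝ)) (b := h) hh.le
    refine le_trans habs (integral_mono_on hh.le hint.abs
      ((intervalIntegrable_rpow' hβ).mul_const _) ?_)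
    intro x hx
    rw [abs_mul, abs_of_nonneg (Real.rpow_nonneg hx.1 β)]
    have : |x - (0+1/2)*h| ≤ h/2 := by rw [abs_le]; constructor <;> nlinarith [hx.1, hx.2]
    nlinarith [Real.rpow_nonneg hx.1 β]
  calc |∫ x in (0:ℝ)..h, x ^ β * (x - (0+1/2)*h)| ≤ ∫ x in (0:ℝ)..h, x ^ β * (h/2) := h1
    _ = (h ^ (β+1) - 0 ^ (β+1)) / (β+1) * (h/2) := by
        rw [intervalIntegral.integral_mul_const, integral_rpow (Or.inl hβ)]
    _ = h ^ (β+2) / (2*(β+1)) := by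
        have h2 : h ^ (β+2) = h^(β+1) * h := by
          rw [show β+2 = (β+1)+1 by ring, Real.rpow_add hh, Real.rpow_one]
        rw [Real.zero_rpow hβ1.ne', sub_zero, h2]
        field_simp



lemma Imoment_pos {β h : ℝ} (hβ : -1 < β) (hh : 0 < h) (k : ℕ) (hk : 1 ≤ k) :
    |∫ x in ((k:ℝ)*h)..(((k:ℝ)+1)*h), x ^ β * (x - ((k:ℝ)+1/2)*h)|
      ≤ |β| * max 1 (2 ^ (β-1)) * ((k:ℝ)*h) ^ (β-1) * h^3 / 4 := by
  have hk1 : (1:ℝ) ≤ (k:ℝ) := by exact_mod_cast hk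
  have hu : 0 < (k:ℝ)*h := by positivity
  set u := (k:ℝ)*h with hu_def
  set v := ((k:ℝ)+1)*h with hv_def
  set m := ((k:ℝ)+1/2)*h with hm_def
  have huv : u ≤ v := by rw [hu_def, hv_def]; nlinarith
  have hm : u ≤ m ∧ m ≤ v := by constructor <;> [skip;skip] <;> rw [hm_def] <;> nlinarith
  set c := max 1 (2 ^ (β-1) : ℝ) with hc_def
  have hc1 : (1:ℝ) ≤ c := le_max_left _ _
  -- derivative bound on [u,v]
  have hD : ∀ t ∈ Icc u v, t ^ (β-1) ≤ c * u ^ (β-1) := by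
    intro t ht
    have ht0 : 0 < t := lt_of_lt_of_le hu ht.1
    rcases le_or_gt β 1 with hb | hb
    · calc t ^ (β-1) ≤ u ^ (β-1) :=
            Real.rpow_le_rpow_of_nonpos hu ht.1 (by linarith)
        _ ≤ c * u ^ (β-1) := by nlinarith [Real.rpow_nonneg hu.le (β-1)]
    · have h2 : t ≤ 2*u := by rw [hu_def]; nlinarith [ht.2]
      calc t ^ (β-1) ≤ (2*u) ^ (β-1) := Real.rpow_le_rpow ht0.le h2 (by linarith)
        _ = 2 ^ (β-1) * u ^ (β-1) := Real.mul_rpow (by norm_num) hu.le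
        _ ≤ c * u ^ (β-1) := by
            have := le_max_right (1:ℝ) (2 ^ (β-1))
            nlinarith [Real.rpow_nonneg hu.le (β-1)]
  -- MVT bound
  have hMVT : ∀ x ∈ Icc u v, |x ^ β - m ^ β| ≤ |β| * (c * u ^ (β-1)) * |x - m| := by
    intro x hx
    have := Convex.norm_image_sub_le_of_norm_hasDerivWithin_le
      (f := fun t : ℝ => t ^ β) (f' := fun t => β * t ^ (β-1)) (s := Icc u v)
      (fun t ht => (Real.hasDerivAt_rpow_const
        (Or.inl (ne_of_gt (lt_of_lt_of_le hu ht.1)))).hasDerivWithinAt)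
      (fun t ht => by
        rw [Real.norm_eq_abs, abs_mul, abs_of_nonneg
          (Real.rpow_nonneg (le_of_lt (lt_of_lt_of_le hu ht.1)) (β-1))]
        exact mul_le_mul_of_nonneg_left (hD t ht) (abs_nonneg β))
      (convex_Icc u v) ⟨hm.1, hm.2⟩ hx
    simpa [Real.norm_eq_abs] using this
  -- rewrite integral
  have hint1 : IntervalIntegrable (fun x => x ^ β * (x - m)) MeasureTheory.volume u v :=
    (intervalIntegrable_rpow' hβ).mul_continuousOn (by fun_prop)
  have hint2 : IntervalIntegrable (fun x => m ^ β * (x - m)) MeasureTheory.volume u v :=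
    ((by fun_prop : Continuous (fun x : ℝ => m ^ β * (x - m))).intervalIntegrable u v)
  have heq : (∫ x in u..v, x ^ β * (x - m))
      = ∫ x in u..v, (x ^ β - m ^ β) * (x - m) := by
    have : (∫ x in u..v, (x ^ β - m ^ β) * (x - m))
        = (∫ x in u..v, x ^ β * (x - m)) - ∫ x in u..v, m ^ β * (x - m) := by
      rw [← integral_sub hint1 hint2]
      apply integral_congr; intro x _; ring
    have hzero : (∫ x in u..v, m ^ β * (x - m)) = 0 := by
      rw [intervalIntegral.integral_const_mul, show m = (u+v)/2 by rw [hm_def, hu_def, hv_def]; ring,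
        int_sub_mid, mul_zero]
    rw [this, hzero, sub_zero]
  rw [heq]
  have hbd : ∀ x ∈ Set.uIoc u v, ‖(x ^ β - m ^ β) * (x - m)‖
      ≤ |β| * (c * u ^ (β-1)) * (h^2/4) := by
    intro x hx
    rw [Set.uIoc_of_le huv] at hx
    have hx' : x ∈ Icc u v := ⟨hx.1.le, hx.2⟩
    have h1 := hMVT x hx'
    have hx1 : (k:ℝ)*h ≤ x := by have := hx'.1; rwa [hu_def] at this
    have hx2 : x ≤ ((k:ℝ)+1)*h := by have := hx'.2; rwa [hv_def] at this
    have h2 : |x - m| ≤ h/2 := by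
      rw [abs_le, hm_def]; constructor <;> nlinarith [hx1, hx2]
    rw [Real.norm_eq_abs, abs_mul]
    have hβc : 0 ≤ |β| * (c * u ^ (β-1)) := by positivity
    calc |x ^ β - m ^ β| * |x - m| ≤ (|β| * (c * u ^ (β-1)) * |x - m|) * |x - m| :=
          mul_le_mul_of_nonneg_right h1 (abs_nonneg _)
      _ ≤ |β| * (c * u ^ (β-1)) * (h^2/4) := by
          have hsq : |x - m| * |x - m| ≤ (h/2) * (h/2) :=
            mul_le_mul h2 h2 (abs_nonneg _) (by linarith)
          nlinarith [mul_le_mul_of_nonneg_left hsq hβc]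
  calc |∫ x in u..v, (x ^ β - m ^ β) * (x - m)|
      ≤ |β| * (c * u ^ (β-1)) * (h^2/4) * |v - u| := norm_integral_le_of_norm_le_const hbd
    _ = |β| * c * u ^ (β-1) * h^3 / 4 := by
        rw [show v - u = h by rw [hu_def, hv_def]; ring, abs_of_pos hh]; ring


set_option maxHeartbeats 1000000 in
lemma cell_bound {a β h Lg Lw Mf : ℝ} (ha : 0 < a) (hβ : -1 < β) (hh : 0 < h)
    (w2 f g g' w2' : ℝ → ℝ)
    (hLg : 0 ≤ Lg) (hLw : 0 ≤ Lw) (hMf : 0 ≤ Mf)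
    (hgdef : ∀ x, g x = w2 x * f x)
    (hMfb : ∀ x ∈ Icc (-a) a, |f x| ≤ Mf)
    (hgtay : ∀ m ∈ Icc (-a) a, ∀ x ∈ Icc (-a) a, |g x - g m - g' m * (x-m)| ≤ Lg * (x-m)^2)
    (hglip : ∀ u ∈ Icc (-a) a, ∀ v ∈ Icc (-a) a, |g' u - g' v| ≤ Lg * |u-v|)
    (hwtay : ∀ m ∈ Icc (-a) a, ∀ x ∈ Icc (-a) a, |w2 x - w2 m - w2' m * (x-m)| ≤ Lw * (x-m)^2)
    (hw2cont : ContinuousOn w2 (Icc (-a) a)) (hgcont : ContinuousOn g (Icc (-a) a))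
    (k : ℕ) (hva : ((k:ℝ)+1) * h ≤ a) :
    |(∫ x in ((k:ℝ)*h)..(((k:ℝ)+1)*h), x ^ β * (g x + g (-x)))
       - ((((k:ℝ)+1)*h) ^ (β+1) - ((k:ℝ)*h) ^ (β+1)) / (β+1) *
         ((1/h) * (∫ x in ((k:ℝ)*h)..(((k:ℝ)+1)*h), w2 x) * f (((k:ℝ)+1/2)*h)
          + (1/h) * (∫ x in ((k:ℝ)*h)..(((k:ℝ)+1)*h), w2 (-x)) * f (-(((k:ℝ)+1/2)*h)))|
    ≤ (Lg/2 + Mf*Lw/2) * h^2 * ((((k:ℝ)+1)*h) ^ (β+1) - ((k:ℝ)*h) ^ (β+1)) / (β+1)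
      + Lg * (2*(k:ℝ)+1) * h
        * |∫ x in ((k:ℝ)*h)..(((k:ℝ)+1)*h), x ^ β * (x - ((k:ℝ)+1/2)*h)| := by
  have hβ1 : 0 < β + 1 := by linarith
  set u := (k:ℝ)*h with hu_def
  set v := ((k:ℝ)+1)*h with hv_def
  set m := ((k:ℝ)+1/2)*h with hm_def
  have hu0 : 0 ≤ u := by positivity
  have huv : u ≤ v := by rw [hu_def, hv_def]; nlinarith
  have hvu : v - u = h := by rw [hu_def, hv_def]; ring
  have hum : u ≤ m := by rw [hu_def, hm_def]; nlinarith
  have hmv : m ≤ v := by rw [hm_def, hv_def]; nlinarith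
  have hsub : Icc u v ⊆ Icc (-a) a := fun x hx =>
    ⟨by linarith [hx.1, ha.le], le_trans hx.2 hva⟩
  have hsub' : uIcc u v ⊆ Icc (-a) a := by rw [uIcc_of_le huv]; exact hsub
  have hmem : ∀ x ∈ Icc u v, x ∈ Icc (-a) a := fun x hx => hsub hx
  have hnegmem : ∀ x ∈ Icc u v, -x ∈ Icc (-a) a := by
    intro x hx
    have := hsub hx
    exact ⟨by linarith [this.2], by linarith [this.1]⟩
  have hmmem : m ∈ Icc (-a) a := hsub ⟨hum, hmv⟩
  have hnegm : -m ∈ Icc (-a) a := ⟨by linarith [hmmem.2], by linarith [hmmem.1]⟩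
  -- components
  set J := (v ^ (β+1) - u ^ (β+1)) / (β+1) with hJ_def
  have hJint : (∫ x in u..v, x ^ β) = J := integral_rpow (Or.inl hβ)
  have hJ0 : 0 ≤ J := by
    rw [← hJint]
    apply integral_nonneg huv
    intro x hx
    exact Real.rpow_nonneg (le_trans hu0 hx.1) β
  set S := ∫ x in u..v, w2 x with hS_def
  set S' := ∫ x in u..v, w2 (-x) with hS'_def
  set d := (1/h) * S * f m + (1/h) * S' * f (-m) with hd_def
  set c1 := g' m - g' (-m) with hc1_def
  set I := ∫ x in u..v, x ^ β * (x - m) with hI_def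
  -- continuity facts
  have hgneg : ContinuousOn (fun x => g (-x)) (Icc u v) := by
    apply (hgcont.mono (fun z hz => hz)).comp continuous_neg.continuousOn
    intro x hx; exact hnegmem x hx
  have hφcont : ContinuousOn (fun x => g x + g (-x)) (Icc u v) :=
    ((hgcont.mono hsub).add hgneg)
  set ψ := fun x => (g x + g (-x)) - d - c1 * (x - m) with hψ_def
  have hψcont : ContinuousOn ψ (Icc u v) := by
    apply (hφcont.sub continuousOn_const).sub
    exact (continuous_const.mul (continuous_id.sub continuous_const)).continuousOn
  have hrpow : IntervalIntegrable (fun x => x ^ β) MeasureTheory.volume u v :=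
    intervalIntegrable_rpow' hβ
  have hint1 : IntervalIntegrable (fun x => x ^ β * (g x + g (-x)))
      MeasureTheory.volume u v := by
    apply hrpow.mul_continuousOn
    rw [uIcc_of_le huv]; exact hφcont
  have hintψ : IntervalIntegrable (fun x => x ^ β * ψ x) MeasureTheory.volume u v := by
    apply hrpow.mul_continuousOn
    rw [uIcc_of_le huv]; exact hψcont
  have hintI : IntervalIntegrable (fun x => x ^ β * (x - m))
      MeasureTheory.volume u v := by
    apply hrpow.mul_continuousOn
    exact (continuous_id.sub continuous_const).continuousOn
  -- decomposition identity
  have hkey : (∫ x in u..v, x ^ β * (g x + g (-x))) - J * d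
      = (∫ x in u..v, x ^ β * ψ x) + c1 * I := by
    have e1 : ∀ x, x ^ β * (g x + g (-x))
        = x ^ β * ψ x + d * x ^ β + c1 * (x ^ β * (x - m)) := by
      intro x; rw [hψ_def]; ring
    have e2 : (∫ x in u..v, x ^ β * (g x + g (-x)))
        = (∫ x in u..v, x ^ β * ψ x) + ((∫ x in u..v, d * x ^ β)
            + ∫ x in u..v, c1 * (x ^ β * (x - m))) := by
      rw [← integral_add (hrpow.const_mul d) (hintI.const_mul c1),
          ← integral_add hintψ ((hrpow.const_mul d).add (hintI.const_mul c1))]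
      apply integral_congr
      exact fun x _ => by linear_combination e1 x
    rw [e2, intervalIntegral.integral_const_mul, intervalIntegral.integral_const_mul, hJint]
    have : (∫ x in u..v, x ^ β * (x - m)) = I := rfl
    rw [this]
    ring
  -- midpoint estimates for w2 on both cells
  have hua : -a ≤ u := by linarith [ha.le]
  have hmid1 : |w2 m - (1/h) * S| ≤ Lw * h^2 / 4 := by
    have hest := midpoint_est hLw w2 w2' hwtay hw2cont huv hua hva
    rw [hvu, show w2 ((u+v)/2) = w2 m from congrArg w2
      (by rw [hu_def, hv_def, hm_def]; ring)] at hest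
    have e : w2 m - (1/h) * S = (1/h) * (h * w2 m - S) := by field_simp
    rw [e, abs_mul, abs_of_pos (by positivity : (0:ℝ) < 1/h), abs_sub_comm]
    calc (1/h) * |S - h * w2 m| ≤ (1/h) * (Lw * h^3 / 4) := by
          apply mul_le_mul_of_nonneg_left hest (by positivity)
      _ = Lw * h^2 / 4 := by field_simp
  have hmid2 : |w2 (-m) - (1/h) * S'| ≤ Lw * h^2 / 4 := by
    have hSS : S' = ∫ x in (-v)..(-u), w2 x := integral_comp_neg w2
    have hest := midpoint_est hLw w2 w2' hwtay hw2cont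
      (by linarith : -v ≤ -u) (by linarith : -a ≤ -v) (by linarith : -u ≤ a)
    rw [show w2 ((-v + -u)/2) = w2 (-m) from congrArg w2
      (by rw [hu_def, hv_def, hm_def]; ring),
      show (-u - -v) = h by rw [hu_def, hv_def]; ring, ← hSS] at hest
    have e : w2 (-m) - (1/h) * S' = (1/h) * (h * w2 (-m) - S') := by field_simp
    rw [e, abs_mul, abs_of_pos (by positivity : (0:ℝ) < 1/h), abs_sub_comm]
    calc (1/h) * |S' - h * w2 (-m)| ≤ (1/h) * (Lw * h^3 / 4) := by
          apply mul_le_mul_of_nonneg_left hest (by positivity)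
      _ = Lw * h^2 / 4 := by field_simp
  -- bound on |(g m + g (-m)) - d|
  have hφd : |(g m + g (-m)) - d| ≤ Mf * Lw * h^2 / 2 := by
    have e : (g m + g (-m)) - d
        = (w2 m - (1/h) * S) * f m + (w2 (-m) - (1/h) * S') * f (-m) := by
      rw [hgdef m, hgdef (-m), hd_def]; ring
    rw [e]
    have b1 : |(w2 m - (1/h) * S) * f m| ≤ (Lw * h^2 / 4) * Mf := by
      rw [abs_mul]
      exact mul_le_mul hmid1 (hMfb m hmmem) (abs_nonneg _) (by positivity)
    have b2 : |(w2 (-m) - (1/h) * S') * f (-m)| ≤ (Lw * h^2 / 4) * Mf := by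
      rw [abs_mul]
      exact mul_le_mul hmid2 (hMfb (-m) hnegm) (abs_nonneg _) (by positivity)
    calc |(w2 m - (1/h) * S) * f m + (w2 (-m) - (1/h) * S') * f (-m)|
        ≤ |(w2 m - (1/h) * S) * f m| + |(w2 (-m) - (1/h) * S') * f (-m)| := abs_add_le _ _
      _ ≤ (Lw * h^2 / 4) * Mf + (Lw * h^2 / 4) * Mf := add_le_add b1 b2
      _ = Mf * Lw * h^2 / 2 := by ring
  -- pointwise bound on ψ
  have hψbd : ∀ x ∈ Icc u v, |ψ x| ≤ (Lg/2 + Mf*Lw/2) * h^2 := by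
    intro x hx
    have hxa : x ∈ Icc (-a) a := hmem x hx
    have hxna : -x ∈ Icc (-a) a := hnegmem x hx
    have hxm : (x - m)^2 ≤ h^2/4 := by
      have h1 : |x - m| ≤ h/2 := by
        have d1 : m - u = h/2 := by rw [hm_def, hu_def]; ring
        have d2 : v - m = h/2 := by rw [hm_def, hv_def]; ring
        rw [abs_le]
        exact ⟨by linarith [hx.1], by linarith [hx.2]⟩
      nlinarith [abs_nonneg (x - m), sq_abs (x - m)]
    have t1 := hgtay m hmmem x hxa
    have t2 := hgtay (-m) hnegm (-x) hxna
    have e : ψ x = (g x - g m - g' m * (x - m))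
        + (g (-x) - g (-m) - g' (-m) * ((-x) - (-m)))
        + ((g m + g (-m)) - d) := by
      rw [hψ_def, hc1_def]; ring
    rw [e]
    have hsq : ((-x) - (-m))^2 = (x - m)^2 := by ring
    rw [hsq] at t2
    calc |g x - g m - g' m * (x - m) + (g (-x) - g (-m) - g' (-m) * ((-x) - (-m)))
          + ((g m + g (-m)) - d)|
        ≤ |g x - g m - g' m * (x - m)| + |g (-x) - g (-m) - g' (-m) * ((-x) - (-m))|
          + |(g m + g (-m)) - d| := abs_add_three _ _ _
      _ ≤ Lg * (x - m)^2 + Lg * (x - m)^2 + Mf * Lw * h^2 / 2 :=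
          add_le_add (add_le_add t1 t2) hφd
      _ ≤ (Lg/2 + Mf*Lw/2) * h^2 := by
          have := mul_le_mul_of_nonneg_left hxm hLg
          linarith
  -- bound the ψ integral
  have hψint : |∫ x in u..v, x ^ β * ψ x| ≤ (Lg/2 + Mf*Lw/2) * h^2 * J := by
    have habs := intervalIntegral.abs_integral_le_integral_abs (μ := MeasureTheory.volume)
      (f := fun x => x ^ β * ψ x) (a := u) (b := v) huv
    have hmono : (∫ x in u..v, |x ^ β * ψ x|)
        ≤ ∫ x in u..v, x ^ β * ((Lg/2 + Mf*Lw/2) * h^2) := by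
      apply integral_mono_on huv hintψ.abs (hrpow.mul_const _)
      intro x hx
      rw [abs_mul, abs_of_nonneg (Real.rpow_nonneg (le_trans hu0 hx.1) β)]
      exact mul_le_mul_of_nonneg_left (hψbd x hx)
        (Real.rpow_nonneg (le_trans hu0 hx.1) β)
    have : (∫ x in u..v, x ^ β * ((Lg/2 + Mf*Lw/2) * h^2))
        = (Lg/2 + Mf*Lw/2) * h^2 * J := by
      rw [intervalIntegral.integral_mul_const, hJint]; ring
    linarith [le_trans habs hmono]
  -- bound on c1
  have hc1bd : |c1| ≤ Lg * (2*(k:ℝ)+1) * h := by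
    rw [hc1_def]
    calc |g' m - g' (-m)| ≤ Lg * |m - -m| := hglip m hmmem (-m) hnegm
      _ = Lg * (2*(k:ℝ)+1) * h := by
          rw [show m - -m = (2*(k:ℝ)+1)*h by rw [hm_def]; ring,
            abs_of_nonneg (by positivity : (0:ℝ) ≤ (2*(k:ℝ)+1)*h)]
          ring
  -- assemble
  rw [show (∫ x in u..v, x ^ β * (g x + g (-x))) - J * d
      = (∫ x in u..v, x ^ β * ψ x) + c1 * I from hkey]
  calc |(∫ x in u..v, x ^ β * ψ x) + c1 * I|
      ≤ |∫ x in u..v, x ^ β * ψ x| + |c1| * |I| := by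
        rw [← abs_mul]; exact abs_add_le _ _
    _ ≤ (Lg/2 + Mf*Lw/2) * h^2 * J + (Lg * (2*(k:ℝ)+1) * h) * |I| :=
        add_le_add hψint (mul_le_mul_of_nonneg_right hc1bd (abs_nonneg I))
    _ = (Lg/2 + Mf*Lw/2) * h^2 * (v ^ (β+1) - u ^ (β+1)) / (β+1)
        + Lg * (2*(k:ℝ)+1) * h * |I| := by rw [hJ_def]; ring


lemma quadError_eq_sum (a β γ y : ℝ) (ha : 0 < a) (hβ : -1 < β) (hγ : γ ≠ -1)
    (hy : y ∉ Set.Icc (-a) a) (f : ℝ → ℝ) (hf : ContinuousOn f (Set.Icc (-a) a))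
    (N : ℕ) (hN : 1 ≤ N) :
    quadErrorSym a β γ y f N = ∑ k ∈ Finset.range N,
      ((∫ x in ((k:ℝ)*(a/N))..(((k:ℝ)+1)*(a/N)),
          x ^ β * (|x - y| ^ γ * f x + |-x - y| ^ γ * f (-x)))
        - ((((k:ℝ)+1)*(a/N)) ^ (β+1) - ((k:ℝ)*(a/N)) ^ (β+1)) / (β+1) *
          ((1/(a/N)) * (∫ x in ((k:ℝ)*(a/N))..(((k:ℝ)+1)*(a/N)), |x - y| ^ γ)
              * f (((k:ℝ)+1/2)*(a/N))
           + (1/(a/N)) * (∫ x in ((k:ℝ)*(a/N))..(((k:ℝ)+1)*(a/N)), |-x - y| ^ γ)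
              * f (-(((k:ℝ)+1/2)*(a/N))))) := by
  have hβ1 : 0 < β + 1 := by linarith
  have hNR : (0:ℝ) < N := by exact_mod_cast hN
  set h := a / N with hh_def
  have hh : 0 < h := by positivity
  have hNh : (N:ℝ) * h = a := by rw [hh_def]; field_simp
  -- position of y
  have hy' : a < y ∨ y < -a := by
    simp only [Set.mem_Icc, not_and_or, not_le] at hy
    tauto
  -- basic facts about cells
  have cell_in : ∀ k : ℕ, k < N → (0 ≤ (k:ℝ)*h ∧ ((k:ℝ)+1)*h ≤ a) := by
    intro k hk
    constructor
    · positivity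
    · have : ((k:ℝ)+1) ≤ (N:ℝ) := by exact_mod_cast Nat.succ_le_of_lt hk
      calc ((k:ℝ)+1)*h ≤ (N:ℝ)*h := by nlinarith
        _ = a := hNh
  have ftcW2 : ∀ u v : ℝ, -a ≤ u → u ≤ a → -a ≤ v → v ≤ a →
      (Real.sign (v - y) * |v - y| ^ (γ+1) - Real.sign (u - y) * |u - y| ^ (γ+1)) / (γ+1)
        = ∫ x in u..v, |x - y| ^ γ := by
    intro u v h1 h2 h3 h4
    rcases hy' with hcase | hcase
    · exact ftc_w2_lt hγ (by linarith) (by linarith)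
    · exact ftc_w2_gt hγ (by linarith) (by linarith)
  -- continuity of w2 on [-a,a]
  have hw2cont : ContinuousOn (fun x => |x - y| ^ γ) (Set.Icc (-a) a) := by
    intro t ht
    have h0 : t - y ≠ 0 := by
      rcases hy' with hcase | hcase
      · have := ht.2; intro hcon; have : t = y := by linarith [sub_eq_zero.mp hcon]
        linarith [ht.2]
      · have := ht.1; intro hcon
        have ht' : t = y := sub_eq_zero.mp hcon
        linarith [ht.1]
    exact ((by fun_prop : ContinuousAt (fun x : ℝ => |x - y|) t).rpow_const
      (Or.inl (by simpa using h0))).continuousWithinAt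
  -- integrability of the full integrand on each cell (and reflected)
  have hWint : ∀ k : ℕ, k < N →
      IntervalIntegrable (fun x => |x| ^ β * |x - y| ^ γ * f x) MeasureTheory.volume
        ((k:ℝ)*h) (((k:ℝ)+1)*h) := by
    intro k hk
    obtain ⟨h0, h1⟩ := cell_in k hk
    have hsub : Set.uIcc ((k:ℝ)*h) (((k:ℝ)+1)*h) ⊆ Set.Icc (-a) a := by
      rw [Set.uIcc_of_le (by nlinarith)]
      intro x hx
      exact ⟨by linarith [hx.1, ha.le], le_trans hx.2 h1⟩
    have habs : IntervalIntegrable (fun x => |x| ^ β) MeasureTheory.volume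
        ((k:ℝ)*h) (((k:ℝ)+1)*h) := by
      apply (intervalIntegrable_rpow' hβ (a := (k:ℝ)*h) (b := ((k:ℝ)+1)*h)).congr
      intro x hx
      show x ^ β = |x| ^ β
      rw [Set.uIoc_of_le (by nlinarith : (k:ℝ)*h ≤ ((k:ℝ)+1)*h)] at hx
      rw [abs_of_pos (lt_of_le_of_lt h0 hx.1)]
    rw [show (fun x => |x| ^ β * |x - y| ^ γ * f x)
      = fun x => |x| ^ β * (|x - y| ^ γ * f x) from funext fun x => by ring]
    exact habs.mul_continuousOn ((hw2cont.mono hsub).mul (hf.mono hsub))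
  -- reflected integrand integrability
  have hWint' : ∀ k : ℕ, k < N →
      IntervalIntegrable (fun x => |(-x)| ^ β * |(-x) - y| ^ γ * f (-x)) MeasureTheory.volume
        ((k:ℝ)*h) (((k:ℝ)+1)*h) := by
    intro k hk
    obtain ⟨h0, h1⟩ := cell_in k hk
    have hsub : Set.MapsTo (fun x : ℝ => -x) (Set.uIcc ((k:ℝ)*h) (((k:ℝ)+1)*h))
        (Set.Icc (-a) a) := by
      rw [Set.uIcc_of_le (by nlinarith)]
      intro x hx
      exact ⟨by simp; linarith [hx.2], by simp; linarith [hx.1, ha.le]⟩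
    have habs : IntervalIntegrable (fun x => |x| ^ β) MeasureTheory.volume
        ((k:ℝ)*h) (((k:ℝ)+1)*h) := by
      apply (intervalIntegrable_rpow' hβ (a := (k:ℝ)*h) (b := ((k:ℝ)+1)*h)).congr
      intro x hx
      show x ^ β = |x| ^ β
      rw [Set.uIoc_of_le (by nlinarith : (k:ℝ)*h ≤ ((k:ℝ)+1)*h)] at hx
      rw [abs_of_pos (lt_of_le_of_lt h0 hx.1)]
    rw [show (fun x => |(-x)| ^ β * |(-x) - y| ^ γ * f (-x))
      = fun x => |x| ^ β * (|(-x) - y| ^ γ * f (-x)) from funext fun x => by rw [abs_neg]; ring]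
    refine habs.mul_continuousOn (ContinuousOn.mul ?_ ?_)
    · exact (hw2cont.comp (continuous_neg.continuousOn) hsub)
    · exact (hf.comp (continuous_neg.continuousOn) hsub)
  -- split the integral into cells
  set W : ℝ → ℝ := fun x => |x| ^ β * |x - y| ^ γ * f x with hW_def
  have hcast : ∀ k : ℕ, (((k+1:ℕ)):ℝ)*h = ((k:ℝ)+1)*h := fun k => by push_cast; ring
  have hsplit : (∫ x in (-a)..a, W x)
      = ∑ k ∈ Finset.range N, ∫ x in ((k:ℝ)*h)..(((k:ℝ)+1)*h), (W x + W (-x)) := by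
    have hIneg : ∀ k : ℕ, k < N → IntervalIntegrable (fun x => W (-x))
        MeasureTheory.volume ((k:ℝ)*h) (((k:ℝ)+1)*h) := fun k hk => hWint' k hk
    have h2 : ∑ k ∈ Finset.range N, ∫ x in ((k:ℝ)*h)..(((k:ℝ)+1)*h), (W x + W (-x))
        = (∑ k ∈ Finset.range N, ∫ x in ((k:ℝ)*h)..(((k:ℝ)+1)*h), W x)
        + (∑ k ∈ Finset.range N, ∫ x in ((k:ℝ)*h)..(((k:ℝ)+1)*h), W (-x)) := by
      rw [← Finset.sum_add_distrib]
      exact Finset.sum_congr rfl fun k hk =>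
        integral_add (hWint k (Finset.mem_range.mp hk)) (hIneg k (Finset.mem_range.mp hk))
    have h3 : ∑ k ∈ Finset.range N, ∫ x in ((k:ℝ)*h)..(((k:ℝ)+1)*h), W x
        = ∫ x in (0:ℝ)..a, W x := by
      have := sum_integral_adjacent_intervals (μ := MeasureTheory.volume) (f := W)
        (a := fun k : ℕ => (k:ℝ)*h) (n := N) (fun k hk => by
          simpa only [hcast k] using hWint k hk)
      simp only [Nat.cast_zero, zero_mul] at this
      rw [← hNh]
      rw [← this]
      exact Finset.sum_congr rfl fun k _ => by norm_num
    have h4 : ∑ k ∈ Finset.range N, ∫ x in ((k:ℝ)*h)..(((k:ℝ)+1)*h), W (-x)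
        = ∫ x in (0:ℝ)..a, W (-x) := by
      have := sum_integral_adjacent_intervals (μ := MeasureTheory.volume)
        (f := fun x => W (-x))
        (a := fun k : ℕ => (k:ℝ)*h) (n := N) (fun k hk => by
          simpa only [hcast k] using hIneg k hk)
      simp only [Nat.cast_zero, zero_mul] at this
      rw [← hNh]
      rw [← this]
      exact Finset.sum_congr rfl fun k _ => by norm_num
    have h5 : (∫ x in (0:ℝ)..a, W (-x)) = ∫ x in (-a)..(0:ℝ), W x := by
      rw [integral_comp_neg W]
      norm_num
    have h6 : (∫ x in (-a)..(0:ℝ), W x) + (∫ x in (0:ℝ)..a, W x) = ∫ x in (-a)..a, W x := by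
      apply integral_add_adjacent_intervals
      · have hGa : IntervalIntegrable (fun x => W (-x)) MeasureTheory.volume 0 a := by
          rw [show (0:ℝ) = ((0:ℕ):ℝ)*h by norm_num, show a = (((N:ℕ):ℝ)*h) by rw [hNh]]
          exact IntervalIntegrable.trans_iterate (a := fun k : ℕ => (k:ℝ)*h)
            (fun k hk => by simpa only [hcast k] using hIneg k hk)
        have := (IntervalIntegrable.iff_comp_neg (by simp)).mp hGa
        simp only [neg_neg, neg_zero] at this
        exact this.symm
      · rw [show (0:ℝ) = ((0:ℕ):ℝ)*h by norm_num, show a = (((N:ℕ):ℝ)*h) by rw [hNh]]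
        exact IntervalIntegrable.trans_iterate (a := fun k : ℕ => (k:ℝ)*h)
          (fun k hk => by simpa only [hcast k] using hWint k hk)
    rw [h2, h3, h4, h5, ← h6]
    ring
  -- main manipulation
  have hmain : quadErrorSym a β γ y f N = (∫ x in (-a)..a, W x) -
      (1/h) * ∑ n ∈ Finset.Icc (-(N : ℤ)) ((N : ℤ) - 1),
        ((Real.sign (((n : ℝ) + 1) * h) * |((n : ℝ) + 1) * h| ^ (β + 1) -
            Real.sign ((n : ℝ) * h) * |(n : ℝ) * h| ^ (β + 1)) / (β + 1)) *
        ((Real.sign (((n : ℝ) + 1) * h - y) * |((n : ℝ) + 1) * h - y| ^ (γ + 1) -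
            Real.sign ((n : ℝ) * h - y) * |(n : ℝ) * h - y| ^ (γ + 1)) / (γ + 1)) *
        f (((n : ℝ) + 1 / 2) * h) := rfl
  rw [hmain, sum_Icc_pair, hsplit, Finset.mul_sum, ← Finset.sum_sub_distrib]
  apply Finset.sum_congr rfl
  intro k hk
  have hkN := Finset.mem_range.mp hk
  obtain ⟨h0, h1⟩ := cell_in k hkN
  have huv : (k:ℝ)*h ≤ ((k:ℝ)+1)*h := by nlinarith
  push_cast
  have eq1 : (∫ x in ((k:ℝ)*h)..(((k:ℝ)+1)*h), (W x + W (-x)))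
      = ∫ x in ((k:ℝ)*h)..(((k:ℝ)+1)*h),
          x ^ β * (|x - y| ^ γ * f x + |-x - y| ^ γ * f (-x)) := by
    apply integral_congr
    intro x hx
    rw [Set.uIcc_of_le huv] at hx
    have hx0 : 0 ≤ x := le_trans h0 hx.1
    simp only [hW_def, abs_neg, abs_of_nonneg hx0]
    ring
  rw [eq1]
  rw [show ((-1:ℝ) - (k:ℝ) + 1) * h = -((k:ℝ)*h) by ring,
      show ((-1:ℝ) - (k:ℝ)) * h = -(((k:ℝ)+1)*h) by ring,
      show ((-1:ℝ) - (k:ℝ) + 1/2) * h = -(((k:ℝ)+1/2)*h) by ring]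
  rw [sign_rpow_pos (by nlinarith : (0:ℝ) ≤ ((k:ℝ)+1)*h) hβ1,
      sign_rpow_pos h0 hβ1,
      sign_rpow_neg (by linarith : -((k:ℝ)*h) ≤ 0) hβ1,
      sign_rpow_neg (by nlinarith : -(((k:ℝ)+1)*h) ≤ 0) hβ1]
  rw [ftcW2 ((k:ℝ)*h) (((k:ℝ)+1)*h) (by linarith [ha.le]) (le_trans (by nlinarith) h1)
        (by nlinarith [ha.le]) h1,
      ftcW2 (-(((k:ℝ)+1)*h)) (-((k:ℝ)*h)) (by linarith) (by linarith [ha.le])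
        (by linarith) (by linarith [ha.le])]
  rw [← integral_comp_neg (fun x => |x - y| ^ γ)]
  simp only [neg_neg]
  ring



set_option maxHeartbeats 1000000 in
theorem stmt16 (a β γ y : ℝ) (ha : 0 < a) (hβ : -1 < β) (hγ : γ ≠ -1)
    (hy : y ∉ Set.Icc (-a) a) (f : ℝ → ℝ) (hf : ContDiffOn ℝ 2 f (Set.Icc (-a) a)) :
    ∃ K : ℝ, 0 < K ∧ ∀ N : ℕ, 1 ≤ N →
      |quadErrorSym a β γ y f N| ≤ K / (N : ℝ) ^ 2 := by
  have haa : -a < a := by linarith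
  have hβ1 : 0 < β + 1 := by linarith
  have hy' : a < y ∨ y < -a := by
    simp only [Set.mem_Icc, not_and_or, not_le] at hy
    tauto
  -- smoothness of w2
  have hw2cd : ContDiffOn ℝ 2 (fun x => |x - y| ^ γ) (Set.Icc (-a) a) := by
    rcases hy' with hc | hc
    · apply ContDiffOn.congr (f := fun x => (y - x) ^ γ)
      · intro x hx
        exact (((contDiff_const.sub contDiff_id).contDiffAt).rpow_const_of_ne
          (by intro h0; simp only [id_eq] at h0
              have h1 := sub_eq_zero.mp h0; have := hx.2; linarith)).contDiffWithinAt
      · intro x hx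
        rw [abs_of_neg (by linarith [hx.2] : x - y < 0)]
        ring_nf
    · apply ContDiffOn.congr (f := fun x => (x - y) ^ γ)
      · intro x hx
        exact (((contDiff_id.sub contDiff_const).contDiffAt).rpow_const_of_ne
          (by intro h0; simp only [id_eq] at h0
              have h1 := sub_eq_zero.mp h0; have := hx.1; linarith)).contDiffWithinAt
      · intro x hx
        rw [abs_of_pos (by linarith [hx.1] : 0 < x - y)]
  have hgcd : ContDiffOn ℝ 2 (fun x => |x - y| ^ γ * f x) (Set.Icc (-a) a) := hw2cd.mul hf
  obtain ⟨g', Lg, hLgpos, _, hgbd, hglip, hgtay⟩ := c2_package haa _ hgcd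
  obtain ⟨w2', Lw, hLwpos, _, hwbd, hwlip, hwtay⟩ := c2_package haa _ hw2cd
  obtain ⟨Mf0, hMf0⟩ := isCompact_Icc.exists_bound_of_continuousOn hf.continuousOn
  set Mf := max Mf0 0 with hMf_def
  have hMf : 0 ≤ Mf := le_max_right _ _
  have hMfb : ∀ x ∈ Set.Icc (-a) a, |f x| ≤ Mf := fun x hx =>
    le_trans (hMf0 x hx) (le_max_left _ _)
  set cβ := max 1 (2 ^ (β-1) : ℝ) with hcβ_def
  have hcβ : (1:ℝ) ≤ cβ := le_max_left _ _
  have ha1 : (0:ℝ) < a ^ (β+1) := Real.rpow_pos_of_pos ha _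
  set Sβ := 1 + 1/(β+1) with hSβ_def
  have hSβ : 0 < Sβ := by rw [hSβ_def]; positivity
  set C1 := (Lg/2 + Mf*Lw/2) * (a^(β+1)/(β+1)) with hC1_def
  set C2 := Lg * (a^(β+1)/(2*(β+1))) with hC2_def
  set C3 := 3*Lg*|β| * cβ/4 * Sβ * a^(β+1) with hC3_def
  have hC1 : 0 ≤ C1 := by
    apply mul_nonneg
    · nlinarith [mul_nonneg hMf hLwpos.le]
    · positivity
  have hC2 : 0 ≤ C2 := by apply mul_nonneg hLgpos.le; positivity
  have hC3 : 0 ≤ C3 := by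
    apply mul_nonneg (mul_nonneg _ hSβ.le) ha1.le
    have h1 : (0:ℝ) ≤ 3*Lg*|β| :=
      mul_nonneg (mul_nonneg (by norm_num) hLgpos.le) (abs_nonneg β)
    have h2 : (0:ℝ) ≤ 3*Lg*|β| * cβ := mul_nonneg h1 (by linarith)
    linarith
  refine ⟨(C1 + C2 + C3) * a^2 + 1, by nlinarith [sq_nonneg a, mul_nonneg (by linarith : (0:ℝ) ≤ C1+C2+C3) (sq_nonneg a)], ?_⟩
  intro N hN
  have hNR : (0:ℝ) < N := by exact_mod_cast hN
  set h := a / N with hh_def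
  have hh : 0 < h := by positivity
  have hNh : (N:ℝ) * h = a := by rw [hh_def]; field_simp
  have hha : h ≤ a := by
    rw [hh_def]
    rw [div_le_iff₀ hNR]
    nlinarith [hNR, (by exact_mod_cast hN : (1:ℝ) ≤ N)]
  have hhb : h ^ (β+1) ≤ a ^ (β+1) := Real.rpow_le_rpow hh.le hha hβ1.le
  rw [quadError_eq_sum a β γ y ha hβ hγ hy f hf.continuousOn N hN]
  -- cells inside [0,a]
  have hva : ∀ k : ℕ, k < N → ((k:ℝ)+1)*h ≤ a := by
    intro k hk
    have : ((k:ℝ)+1) ≤ (N:ℝ) := by exact_mod_cast Nat.succ_le_of_lt hk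
    calc ((k:ℝ)+1)*h ≤ (N:ℝ)*h := by nlinarith
      _ = a := hNh
  -- apply per-cell bound
  have step1 : |∑ k ∈ Finset.range N,
      ((∫ x in ((k:ℝ)*h)..(((k:ℝ)+1)*h),
          x ^ β * (|x - y| ^ γ * f x + |-x - y| ^ γ * f (-x)))
        - ((((k:ℝ)+1)*h) ^ (β+1) - ((k:ℝ)*h) ^ (β+1)) / (β+1) *
          ((1/h) * (∫ x in ((k:ℝ)*h)..(((k:ℝ)+1)*h), |x - y| ^ γ)
              * f (((k:ℝ)+1/2)*h)
           + (1/h) * (∫ x in ((k:ℝ)*h)..(((k:ℝ)+1)*h), |-x - y| ^ γ)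
              * f (-(((k:ℝ)+1/2)*h))))|
    ≤ ∑ k ∈ Finset.range N,
        ((Lg/2 + Mf*Lw/2) * h^2 * ((((k:ℝ)+1)*h) ^ (β+1) - ((k:ℝ)*h) ^ (β+1)) / (β+1)
          + Lg * (2*(k:ℝ)+1) * h
            * |∫ x in ((k:ℝ)*h)..(((k:ℝ)+1)*h), x ^ β * (x - ((k:ℝ)+1/2)*h)|) := by
    refine le_trans (Finset.abs_sum_le_sum_abs _ _) (Finset.sum_le_sum ?_)
    intro k hk
    exact cell_bound ha hβ hh (fun t => |t - y| ^ γ) f (fun t => |t - y| ^ γ * f t) g' w2'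
      hLgpos.le hLwpos.le hMf (fun x => rfl) hMfb hgtay hglip hwtay
      hw2cd.continuousOn hgcd.continuousOn k (hva k (Finset.mem_range.mp hk))
  refine le_trans step1 ?_
  -- telescoping sum for the first part
  have htel : ∑ k ∈ Finset.range N, ((((k:ℝ)+1)*h) ^ (β+1) - ((k:ℝ)*h) ^ (β+1))
      = a^(β+1) := by
    have e1 : ∑ k ∈ Finset.range N, ((((k:ℝ)+1)*h) ^ (β+1) - ((k:ℝ)*h) ^ (β+1))
        = ∑ k ∈ Finset.range N,
          (((((k+1:ℕ)):ℝ)*h) ^ (β+1) - (((k:ℕ):ℝ)*h) ^ (β+1)) := by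
      apply Finset.sum_congr rfl
      intro k _
      push_cast
      ring_nf
    rw [e1, Finset.sum_range_sub (f := fun k : ℕ => (((k:ℕ):ℝ)*h) ^ (β+1)) N]
    simp only [Nat.cast_zero, zero_mul, Real.zero_rpow hβ1.ne', sub_zero, hNh]
  rw [Finset.sum_add_distrib]
  have hD : ∑ k ∈ Finset.range N,
      (Lg/2 + Mf*Lw/2) * h^2 * ((((k:ℝ)+1)*h) ^ (β+1) - ((k:ℝ)*h) ^ (β+1)) / (β+1)
      = C1 * h^2 := by
    have e2 : ∀ k : ℕ,
        (Lg/2 + Mf*Lw/2) * h^2 * ((((k:ℝ)+1)*h) ^ (β+1) - ((k:ℝ)*h) ^ (β+1)) / (β+1)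
        = ((Lg/2 + Mf*Lw/2) * h^2 / (β+1)) * ((((k:ℝ)+1)*h) ^ (β+1) - ((k:ℝ)*h) ^ (β+1)) := by
      intro k; ring
    rw [Finset.sum_congr rfl (fun k _ => e2 k), ← Finset.mul_sum, htel, hC1_def]
    field_simp
  rw [hD]
  -- second part
  have hB : ∑ k ∈ Finset.range N, Lg * (2*(k:ℝ)+1) * h
      * |∫ x in ((k:ℝ)*h)..(((k:ℝ)+1)*h), x ^ β * (x - ((k:ℝ)+1/2)*h)|
      ≤ (C2 + C3) * h^2 := by
    obtain ⟨n, rfl⟩ : ∃ n, N = n + 1 := ⟨N - 1, (Nat.succ_pred_eq_of_pos hN).symm⟩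
    rw [Finset.sum_range_succ']
    have hb0 : Lg * (2*((0:ℕ):ℝ)+1) * h
        * |∫ x in (((0:ℕ):ℝ)*h)..((((0:ℕ):ℝ)+1)*h), x ^ β * (x - (((0:ℕ):ℝ)+1/2)*h)|
        ≤ C2 * h^2 := by
      rw [Nat.cast_zero]
      have hI0 := Imoment_zero (h := h) hβ hh
      have e3 : h ^ (β+2) = h ^ (β+1) * h := by
        rw [show β+2 = (β+1)+1 by ring, Real.rpow_add hh, Real.rpow_one]
      calc Lg * (2*(0:ℝ)+1) * h
            * |∫ x in ((0:ℝ)*h)..(((0:ℝ)+1)*h), x ^ β * (x - ((0:ℝ)+1/2)*h)|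
          ≤ Lg * (2*(0:ℝ)+1) * h * (h ^ (β+2) / (2*(β+1))) := by
            apply mul_le_mul_of_nonneg_left hI0
            positivity
        _ = Lg * (h ^ (β+1) * h^2) / (2*(β+1)) := by rw [e3]; ring
        _ ≤ Lg * (a ^ (β+1) * h^2) / (2*(β+1)) := by
            apply div_le_div_of_nonneg_right ?_ (by linarith)
            apply mul_le_mul_of_nonneg_left ?_ hLgpos.le
            exact mul_le_mul_of_nonneg_right hhb (by positivity)
        _ = C2 * h^2 := by rw [hC2_def]; ring
    have hbi : ∀ i ∈ Finset.range n,
        Lg * (2*((i+1:ℕ):ℝ)+1) * h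
          * |∫ x in (((i+1:ℕ):ℝ)*h)..((((i+1:ℕ):ℝ)+1)*h), x ^ β * (x - (((i+1:ℕ):ℝ)+1/2)*h)|
        ≤ (3*Lg*|β| * cβ/4) * (((i:ℝ)+1) ^ β * h ^ (β+3)) := by
      intro i _
      have hIb := Imoment_pos (h := h) hβ hh (i+1) (by omega)
      have ht1 : (1:ℝ) ≤ ((i+1:ℕ):ℝ) := by exact_mod_cast Nat.one_le_iff_ne_zero.mpr (by omega)
      set t := ((i+1:ℕ):ℝ) with ht_def
      have ht0 : 0 < t := by linarith
      have hmulr : (t*h) ^ (β-1) = t ^ (β-1) * h ^ (β-1) := Real.mul_rpow ht0.le hh.le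
      have htb : t ^ β = t ^ (β-1) * t := by
        rw [show β = (β-1)+1 by ring, Real.rpow_add ht0, Real.rpow_one]
        ring_nf
      have h4 : h ^ ((4:ℝ)) = h^(4:ℕ) := by
        rw [show ((4:ℝ)) = ((4:ℕ):ℝ) by norm_num, Real.rpow_natCast]
      have hp : h ^ (β+3) = h ^ (β-1) * h^(4:ℕ) := by
        rw [show β+3 = (β-1)+4 by ring, Real.rpow_add hh, h4]
      have hti : ((i:ℝ)+1) = t := by rw [ht_def]; push_cast; ring
      rw [hti, htb, hp]
      calc Lg * (2*t+1) * h * |∫ x in (t*h)..((t+1)*h), x ^ β * (x - (t+1/2)*h)|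
          ≤ Lg * (2*t+1) * h * (|β| * cβ * (t*h) ^ (β-1) * h^3 / 4) := by
            apply mul_le_mul_of_nonneg_left hIb
            have : (0:ℝ) ≤ 2*t+1 := by linarith
            positivity
        _ = (Lg * |β| * cβ / 4) * ((2*t+1) * (t ^ (β-1) * (h ^ (β-1) * h^(4:ℕ)))) := by
            rw [hmulr]; ring
        _ ≤ (Lg * |β| * cβ / 4) * ((3*t) * (t ^ (β-1) * (h ^ (β-1) * h^(4:ℕ)))) := by
            apply mul_le_mul_of_nonneg_left ?_ (by positivity)
            apply mul_le_mul_of_nonneg_right (by linarith)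
            positivity
        _ = (3*Lg*|β| * cβ/4) * (t ^ (β-1) * t * (h ^ (β-1) * h^(4:ℕ))) := by ring
    have hsum2 : ∑ i ∈ Finset.range n,
        (3*Lg*|β| * cβ/4) * (((i:ℝ)+1) ^ β * h ^ (β+3)) ≤ C3 * h^2 := by
      have e4 : ∀ i : ℕ, (3*Lg*|β| * cβ/4) * (((i:ℝ)+1) ^ β * h ^ (β+3))
          = ((3*Lg*|β| * cβ/4) * h ^ (β+3)) * ((i:ℝ)+1) ^ β := fun i => by ring
      rw [Finset.sum_congr rfl (fun i _ => e4 i), ← Finset.mul_sum]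
      have hcoef : (0:ℝ) ≤ (3*Lg*|β| * cβ/4) * h ^ (β+3) := by
        have h1 : (0:ℝ) ≤ 3*Lg*|β| :=
          mul_nonneg (mul_nonneg (by norm_num) hLgpos.le) (abs_nonneg β)
        have h2 : (0:ℝ) ≤ 3*Lg*|β| * cβ := mul_nonneg h1 (by linarith)
        have h3 : (0:ℝ) ≤ h ^ (β+3) := Real.rpow_nonneg hh.le _
        nlinarith
      have hs := sum_rpow_le hβ n
      have hnN : ((n:ℝ)) ^ (β+1) ≤ ((n+1:ℕ):ℝ) ^ (β+1) := by
        apply Real.rpow_le_rpow (Nat.cast_nonneg n) ?_ hβ1.le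
        push_cast; linarith
      have hNb : Sβ * ((n:ℝ)) ^ (β+1) ≤ Sβ * ((n+1:ℕ):ℝ) ^ (β+1) :=
        mul_le_mul_of_nonneg_left hnN hSβ.le
      have hfin : ((3*Lg*|β| * cβ/4) * h ^ (β+3)) * (Sβ * ((n+1:ℕ):ℝ) ^ (β+1))
          = C3 * h^2 := by
        have e5 : h ^ (β+3) = h ^ (β+1) * h^2 := by
          rw [show β+3 = (β+1)+2 by ring, Real.rpow_add hh,
            show ((2:ℝ)) = ((2:ℕ):ℝ) by norm_num, Real.rpow_natCast]
        have e6 : h ^ (β+1) * ((n+1:ℕ):ℝ) ^ (β+1) = a ^ (β+1) := by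
          rw [← Real.mul_rpow hh.le (Nat.cast_nonneg _)]
          congr 1
          rw [← hNh]; ring
        rw [e5, hC3_def]
        calc (3*Lg*|β| * cβ/4) * (h ^ (β+1) * h^2) * (Sβ * ((n+1:ℕ):ℝ) ^ (β+1))
            = (3*Lg*|β| * cβ/4) * Sβ * (h ^ (β+1) * ((n+1:ℕ):ℝ) ^ (β+1)) * h^2 := by ring
          _ = 3*Lg*|β| * cβ/4 * Sβ * a^(β+1) * h^2 := by rw [e6]
      calc ((3*Lg*|β| * cβ/4) * h ^ (β+3)) * ∑ i ∈ Finset.range n, ((i:ℝ)+1) ^ β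
          ≤ ((3*Lg*|β| * cβ/4) * h ^ (β+3)) * (Sβ * ((n:ℝ)) ^ (β+1)) := by
            apply mul_le_mul_of_nonneg_left ?_ hcoef
            rw [hSβ_def]
            exact hs
        _ ≤ ((3*Lg*|β| * cβ/4) * h ^ (β+3))* (Sβ * ((n+1:ℕ):ℝ) ^ (β+1)) :=
            mul_le_mul_of_nonneg_left hNb hcoef
        _ = C3 * h^2 := hfin
    have hcomb := add_le_add (le_trans (Finset.sum_le_sum hbi) hsum2) hb0
    linarith
  have hh2 : h^2 = a^2/(N:ℝ)^2 := by rw [hh_def, div_pow]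
  refine le_trans (add_le_add_right hB _) ?_
  have e7 : C1*h^2 + (C2+C3)*h^2 = ((C1+C2+C3)*a^2)/(N:ℝ)^2 := by rw [hh2]; ring
  rw [e7]
  exact (div_le_div_iff_of_pos_right (by positivity)).mpr (by linarith)


end Helpers
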